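/- Let q = 2^m with m a positive integer. If m ≡ 0 (mod 5), then the trinomial F(X) = X^{11}(X^{10(q−1)} + X^{4(q−1)} + 1) is not a permutation polynomial of F_{q^2}. -/

import Mathlib

/-- Let `q = 2^m` with `m ≡ 0 (mod 5)`. Then
`F(X) = X^11 (X^{10(q-1)} + X^{4(q-1)} + 1)` is not a permutation of `F_{q^2}`. -/
theorem stmt_8 (m q : ℕ) (hm : 0 < m) (hq : q = 2 ^ m) (h5 : m % 5 = 0)
    (F : Type*) [Field F] [Fintype F] (hF : Fintype.card F = q ^ 2) :
    ¬ Function.Bijective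
        (fun x : F => x ^ 11 * (x ^ (10 * (q - 1)) + x ^ (4 * (q - 1)) + 1)) := by
  intro hbij
  have hinj := hbij.injective
  have hm5 : 5 ≤ m := by omega
  have hq32 : 32 ≤ q := by
    rw [hq]
    calc (32:ℕ) = 2 ^ 5 := by norm_num
    _ ≤ 2 ^ m := Nat.pow_le_pow_right (by norm_num) hm5
  have hq1 : 1 ≤ q := by omega
  have hQbig : 1024 ≤ q ^ 2 := by nlinarith
  -- characteristic 2
  obtain ⟨p, hp⟩ := CharP.exists F
  haveI := hp
  have hpp : p.Prime := CharP.char_is_prime F p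
  have hp2 : p = 2 := by
    obtain ⟨n, -, hn⟩ := FiniteField.card F p
    have hpn : p ^ (n : ℕ) = 2 ^ (m * 2) := by rw [← hn, hF, hq, ← pow_mul]
    have h1 : p ∣ 2 ^ (m * 2) := hpn ▸ dvd_pow_self p n.ne_zero
    exact (Nat.prime_dvd_prime_iff_eq hpp Nat.prime_two).mp (hpp.dvd_of_dvd_pow h1)
  subst hp2
  haveI : Fact (Nat.Prime 2) := ⟨Nat.prime_two⟩
  have h2 : (2 : F) = 0 := by exact_mod_cast CharP.cast_eq_zero F 2
  have hFrob : ∀ a b : F, (a + b) ^ q = a ^ q + b ^ q := by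
    intro a b
    rw [hq]
    exact add_pow_char_pow a b 2 m
  -- generator of the unit group
  obtain ⟨u, hu⟩ := IsCyclic.exists_generator (α := Fˣ)
  have huord : orderOf u = q ^ 2 - 1 := by
    rw [orderOf_eq_card_of_forall_mem_zpowers hu, Nat.card_units,
      Nat.card_eq_fintype_card, hF]
  set v : F := (u : F) with hvdef
  have hvne : v ≠ 0 := Units.ne_zero u
  have hv1 : ∀ k : ℕ, v ^ k = 1 ↔ (q ^ 2 - 1) ∣ k := by
    intro k
    rw [hvdef, ← Units.val_pow_eq_pow_val, Units.val_eq_one, ← orderOf_dvd_iff_pow_eq_one,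
      huord]
  have vpow : ∀ a b : ℕ, (v ^ a) ^ b = v ^ (a * b) := fun a b => (pow_mul v a b).symm
  have vexp : ∀ a b : ℕ, a = b → v ^ a = v ^ b := fun a b h => by rw [h]
  -- 11 divides q^2 - 1
  have hk : 10 * (m / 5) = m * 2 := by omega
  have hq2eq : q ^ 2 = 1024 ^ (m / 5) := by
    rw [hq, ← pow_mul, show (1024:ℕ) = 2 ^ 10 by norm_num, ← pow_mul, hk]
  have h11 : 11 ∣ q ^ 2 - 1 := by
    rw [hq2eq]
    have h1 : (1024:ℕ) ^ (m / 5) ≡ 1 ^ (m / 5) [MOD 11] := Nat.ModEq.pow _ (by decide)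
    rw [one_pow] at h1
    exact (Nat.modEq_iff_dvd' (Nat.one_le_pow _ _ (by norm_num))).mp h1.symm
  have hmul : (q - 1) * (q + 1) = q ^ 2 - 1 := by
    zify [hq1, show 1 ≤ q ^ 2 by omega]
    ring
  have hsplit : 11 ∣ q - 1 ∨ 11 ∣ q + 1 :=
    (Nat.Prime.dvd_mul (by norm_num)).mp (hmul ▸ h11)
  rcases hsplit with hA | hB
  · -- Case A : 11 ∣ q - 1
    obtain ⟨s, hs⟩ := h11
    have hs0 : 0 < s := by omega
    have ha11 : (v ^ s) ^ 11 = 1 := by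
      rw [vpow]
      exact (hv1 _).mpr ⟨1, by rw [hs]; ring⟩
    have haq : (v ^ s) ^ (q - 1) = 1 := by
      obtain ⟨w, hw⟩ := hA
      rw [vpow]
      exact (hv1 _).mpr ⟨w, by rw [hw, hs]; ring⟩
    have hane : v ^ s ≠ 1 := by
      intro h
      have hd := (hv1 s).mp h
      have hle := Nat.le_of_dvd hs0 hd
      omega
    have hfa : (v ^ s) ^ 11 * ((v ^ s) ^ (10 * (q - 1)) + (v ^ s) ^ (4 * (q - 1)) + 1)
        = (1:F) := by
      rw [show 10 * (q - 1) = (q - 1) * 10 from by ring,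
        show 4 * (q - 1) = (q - 1) * 4 from by ring, pow_mul, pow_mul, haq, ha11,
        one_pow, one_pow, one_mul]
      linear_combination h2
    have hf1 : (1:F) ^ 11 * ((1:F) ^ (10 * (q - 1)) + (1:F) ^ (4 * (q - 1)) + 1) = 1 := by
      rw [one_pow, one_pow, one_pow, one_mul]
      linear_combination h2
    exact hane (hinj (hfa.trans hf1.symm))
  · -- Case B : 11 ∣ q + 1
    obtain ⟨t, ht⟩ := hB
    have ht1 : 1 ≤ t := by omega
    have hcop : Nat.Coprime 11 (q - 1) := by
      rw [Nat.Prime.coprime_iff_not_dvd (by norm_num)]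
      intro hd
      obtain ⟨w, hw⟩ := hd
      omega
    obtain ⟨c, -, hc⟩ := Nat.exists_mul_mod_eq_one_of_coprime hcop (by omega)
    obtain ⟨e, he⟩ : ∃ e, 11 * c = (q - 1) * e + 1 :=
      ⟨11 * c / (q - 1), by have := Nat.div_add_mod (11 * c) (q - 1); omega⟩
    set ζ : F := v ^ (t * (q - 1)) with hzdef
    have h11t : 11 * (t * (q - 1)) = q ^ 2 - 1 := by
      rw [← hmul, ht]; ring
    have hz11 : ζ ^ 11 = 1 := by
      rw [hzdef, vpow]
      exact (hv1 _).mpr ⟨1, by omega⟩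
    have hzne0 : ζ ≠ 0 := by
      intro h
      rw [h] at hz11
      simp at hz11
    have hzq1 : ζ ^ (q + 1) = 1 := by
      rw [ht, pow_mul, hz11, one_pow]
    have hzq : ζ ^ q = ζ ^ 10 := by
      have h1 : ζ ^ q * ζ = ζ ^ 10 * ζ := by
        calc ζ ^ q * ζ = ζ ^ (q + 1) := (pow_succ ζ q).symm
        _ = 1 := hzq1
        _ = ζ ^ 11 := hz11.symm
        _ = ζ ^ 10 * ζ := pow_succ ζ 10
      exact mul_right_cancel₀ hzne0 h1
    have e100 : ζ ^ 100 = ζ := by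
      calc ζ ^ 100 = (ζ ^ 11) ^ 9 * ζ := by ring
      _ = ζ := by rw [hz11, one_pow, one_mul]
    have e40 : ζ ^ 40 = ζ ^ 7 := by
      calc ζ ^ 40 = (ζ ^ 11) ^ 3 * ζ ^ 7 := by ring
      _ = ζ ^ 7 := by rw [hz11, one_pow, one_mul]
    have e30 : ζ ^ 30 = ζ ^ 8 := by
      calc ζ ^ 30 = (ζ ^ 11) ^ 2 * ζ ^ 8 := by ring
      _ = ζ ^ 8 := by rw [hz11, one_pow, one_mul]
    have e12 : ζ ^ 12 = ζ := by
      calc ζ ^ 12 = ζ ^ 11 * ζ := by ring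
      _ = ζ := by rw [hz11, one_mul]
    have e80 : ζ ^ 80 = ζ ^ 3 := by
      calc ζ ^ 80 = (ζ ^ 11) ^ 7 * ζ ^ 3 := by ring
      _ = ζ ^ 3 := by rw [hz11, one_pow, one_mul]
    set x1 : F := v ^ t with hx1def
    set x2 : F := v ^ (3 * t) with hx2def
    -- powers of x1 and x2
    have hx1a : x1 ^ 11 = v ^ (11 * t) := by
      rw [hx1def, vpow]; exact vexp _ _ (by ring)
    have hx1b : x1 ^ (10 * (q - 1)) = ζ ^ 10 := by
      rw [hx1def, vpow, hzdef, vpow]; exact vexp _ _ (by ring)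
    have hx1c : x1 ^ (4 * (q - 1)) = ζ ^ 4 := by
      rw [hx1def, vpow, hzdef, vpow]; exact vexp _ _ (by ring)
    have hx2a : x2 ^ 11 = v ^ (33 * t) := by
      rw [hx2def, vpow]; exact vexp _ _ (by ring)
    have hx2b : x2 ^ (10 * (q - 1)) = ζ ^ 8 := by
      rw [← e30, hx2def, vpow, hzdef, vpow]; exact vexp _ _ (by ring)
    have hx2c : x2 ^ (4 * (q - 1)) = ζ := by
      rw [← e12, hx2def, vpow, hzdef, vpow]; exact vexp _ _ (by ring)
    set D1 : F := ζ ^ 10 + ζ ^ 4 + 1 with hD1def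
    set D3 : F := ζ ^ 8 + ζ + 1 with hD3def
    have hD1ne : D1 ≠ 0 := by
      intro h
      have hinv : D1 * (ζ^10 + ζ^7 + ζ^5 + ζ^3 + ζ^2 + ζ + 1) = 1 := by
        rw [hD1def]
        linear_combination (ζ^9 + ζ^6 + ζ^4 + ζ^3 + ζ^2 + ζ + 2) * hz11 +
          (ζ^10 + ζ^9 + ζ^7 + ζ^6 + ζ^5 + ζ^4 + ζ^3 + ζ^2 + ζ + 1) * h2
      rw [h, zero_mul] at hinv
      exact zero_ne_one hinv
    have hD3ne : D3 ≠ 0 := by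
      intro h
      have hinv : D3 * (ζ^10 + ζ^9 + ζ^8 + ζ^6 + ζ^4 + ζ^3 + 1) = 1 := by
        rw [hD3def]
        linear_combination (ζ^7 + ζ^6 + ζ^5 + ζ^3 + ζ + 2) * hz11 +
          (ζ^10 + ζ^9 + ζ^8 + ζ^7 + ζ^6 + ζ^5 + ζ^4 + ζ^3 + ζ + 1) * h2
      rw [h, zero_mul] at hinv
      exact zero_ne_one hinv
    -- Frobenius computations
    have hq10 : (ζ ^ 10) ^ q = ζ := by
      calc (ζ ^ 10) ^ q = (ζ ^ q) ^ 10 := by rw [← pow_mul, mul_comm, pow_mul]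
      _ = ζ ^ 100 := by rw [hzq, ← pow_mul]
      _ = ζ := e100
    have hq4 : (ζ ^ 4) ^ q = ζ ^ 7 := by
      calc (ζ ^ 4) ^ q = (ζ ^ q) ^ 4 := by rw [← pow_mul, mul_comm, pow_mul]
      _ = ζ ^ 40 := by rw [hzq, ← pow_mul]
      _ = ζ ^ 7 := e40
    have hq8 : (ζ ^ 8) ^ q = ζ ^ 3 := by
      calc (ζ ^ 8) ^ q = (ζ ^ q) ^ 8 := by rw [← pow_mul, mul_comm, pow_mul]
      _ = ζ ^ 80 := by rw [hzq, ← pow_mul]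
      _ = ζ ^ 3 := e80
    have hD1q : D1 ^ q = ζ + ζ ^ 7 + 1 := by
      rw [hD1def, hFrob, hFrob, one_pow, hq10, hq4]
    have hD3q : D3 ^ q = ζ ^ 3 + ζ ^ 10 + 1 := by
      rw [hD3def, hFrob, hFrob, one_pow, hq8, hzq]
    have L2 : (ζ + ζ ^ 7 + 1) * D3 = (ζ ^ 3 + ζ ^ 10 + 1) * D1 := by
      rw [hD1def, hD3def]
      linear_combination (-ζ^9 + ζ^4 - ζ^3 - ζ^2) * hz11 + (ζ + ζ^8 - ζ^3 - ζ^10) * h2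
    set f1 : F := v ^ (11 * t) * D1 with hf1def
    set f2 : F := v ^ (33 * t) * D3 with hf2def
    have hf1ne : f1 ≠ 0 := mul_ne_zero (pow_ne_zero _ hvne) hD1ne
    have hf2ne : f2 ≠ 0 := mul_ne_zero (pow_ne_zero _ hvne) hD3ne
    have hv22 : v ^ (22 * (t * (q - 1))) = 1 :=
      (hv1 _).mpr ⟨2, by omega⟩
    have key : f1 ^ q * f2 = f2 ^ q * f1 := by
      have h1 : f1 ^ q = v ^ (11 * t * q) * (ζ + ζ ^ 7 + 1) := by
        rw [hf1def, mul_pow, vpow, hD1q]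
      have h2' : f2 ^ q = v ^ (33 * t * q) * (ζ ^ 3 + ζ ^ 10 + 1) := by
        rw [hf2def, mul_pow, vpow, hD3q]
      have hexp : 33 * t * q + 11 * t = (11 * t * q + 33 * t) + 22 * (t * (q - 1)) := by
        zify [hq1]; ring
      have hL : f1 ^ q * f2 = v ^ (11 * t * q + 33 * t) * ((ζ + ζ ^ 7 + 1) * D3) := by
        rw [h1, hf2def, pow_add]; ring
      have hR : f2 ^ q * f1 = v ^ (11 * t * q + 33 * t) * ((ζ ^ 3 + ζ ^ 10 + 1) * D1) := by
        rw [h2', hf1def, show 33 * t * q = 33 * t * q from rfl]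
        calc v ^ (33 * t * q) * (ζ ^ 3 + ζ ^ 10 + 1) * (v ^ (11 * t) * D1)
            = v ^ (33 * t * q + 11 * t) * ((ζ ^ 3 + ζ ^ 10 + 1) * D1) := by
              rw [pow_add]; ring
        _ = v ^ (11 * t * q + 33 * t) * v ^ (22 * (t * (q - 1)))
              * ((ζ ^ 3 + ζ ^ 10 + 1) * D1) := by rw [← pow_add, hexp]
        _ = v ^ (11 * t * q + 33 * t) * ((ζ ^ 3 + ζ ^ 10 + 1) * D1) := by
              rw [hv22, mul_one]
      rw [hL, hR, L2]
    set ρ : F := f1 * f2⁻¹ with hρdef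
    have hρne : ρ ≠ 0 := mul_ne_zero hf1ne (inv_ne_zero hf2ne)
    have hρq : ρ ^ q = ρ := by
      rw [hρdef, mul_pow, inv_pow]
      field_simp
      linear_combination key
    have hρ1 : ρ ^ (q - 1) = 1 := by
      have h1 : ρ ^ (q - 1) * ρ = 1 * ρ := by
        rw [one_mul, ← pow_succ, show q - 1 + 1 = q from by omega, hρq]
      exact mul_right_cancel₀ hρne h1
    set lam : F := ρ ^ c with hlamdef
    have hlam11 : lam ^ 11 = ρ := by
      rw [hlamdef, ← pow_mul, show c * 11 = (q - 1) * e + 1 from by omega, pow_add,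
        pow_mul, hρ1, one_pow, pow_one, one_mul]
    have hlamq : lam ^ (q - 1) = 1 := by
      rw [hlamdef, ← pow_mul, mul_comm, pow_mul, hρ1, one_pow]
    have hlamne : lam ≠ 0 := pow_ne_zero _ hρne
    have hlam10 : lam ^ (10 * (q - 1)) = 1 := by
      rw [show 10 * (q - 1) = (q - 1) * 10 from by ring, pow_mul, hlamq, one_pow]
    have hlam4 : lam ^ (4 * (q - 1)) = 1 := by
      rw [show 4 * (q - 1) = (q - 1) * 4 from by ring, pow_mul, hlamq, one_pow]
    set y : F := lam * x2 with hydef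
    -- f evaluated at x1 and y
    have hx1f : x1 ^ 11 * (x1 ^ (10 * (q - 1)) + x1 ^ (4 * (q - 1)) + 1) = f1 := by
      rw [hx1a, hx1b, hx1c, hf1def, hD1def]
    have hyf : y ^ 11 * (y ^ (10 * (q - 1)) + y ^ (4 * (q - 1)) + 1) = f1 := by
      have hy11 : y ^ 11 = ρ * v ^ (33 * t) := by
        rw [hydef, mul_pow, hlam11, hx2a]
      have hyb : y ^ (10 * (q - 1)) = ζ ^ 8 := by
        rw [hydef, mul_pow, hlam10, one_mul, hx2b]
      have hyc : y ^ (4 * (q - 1)) = ζ := by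
        rw [hydef, mul_pow, hlam4, one_mul, hx2c]
      rw [hy11, hyb, hyc]
      calc ρ * v ^ (33 * t) * (ζ ^ 8 + ζ + 1) = ρ * f2 := by rw [hf2def, hD3def]; ring
      _ = f1 := by rw [hρdef, mul_assoc, inv_mul_cancel₀ hf2ne, mul_one]
    -- x1 ≠ y
    have hne : x1 ≠ y := by
      intro h
      have hx1p : x1 ^ (q - 1) = ζ := by
        rw [hx1def, vpow, hzdef]
      have hyp : y ^ (q - 1) = ζ ^ 3 := by
        calc y ^ (q - 1) = lam ^ (q - 1) * x2 ^ (q - 1) := by rw [hydef, mul_pow]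
        _ = v ^ (3 * t * (q - 1)) := by rw [hlamq, one_mul, hx2def, vpow]
        _ = ζ ^ 3 := by rw [hzdef, vpow]; exact vexp _ _ (by ring)
      have hzz : ζ ^ 3 = ζ := by rw [← hyp, ← h, hx1p]
      have hfac : ζ * (ζ + 1) ^ 2 = 0 := by
        linear_combination hzz + (ζ ^ 2 + ζ) * h2
      rcases mul_eq_zero.mp hfac with h0 | h0
      · exact hzne0 h0
      · have hz1 : ζ = 1 := by
          have h01 : ζ + 1 = 0 := by
            exact pow_eq_zero_iff (two_ne_zero) |>.mp h0
          linear_combination h01 - h2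
        have hd := (hv1 (t * (q - 1))).mp (by rw [← hzdef]; exact hz1)
        have hApos : 0 < t * (q - 1) := Nat.mul_pos (by omega) (by omega)
        have hle := Nat.le_of_dvd hApos hd
        omega
    exact hne (hinj (hx1f.trans hyf.symm))
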